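/- For f(z) = (z⁹ + 3z³)/(3z⁶ + 1), the derivative satisfies f′(z) = 9(z−1)²z²(z+1)²(z²−z+1)²(z²+z+1)² / (3z⁶+1)², and in particular f′ has zeros of order exactly 2 at z = 0, 1, and −1. -/

import Mathlib

noncomputable section

private def F : ℂ → ℂ := fun z => (z ^ 9 + 3 * z ^ 3) / (3 * z ^ 6 + 1)
private def G1 : ℂ → ℂ := fun z => (9 * z ^ 14 - 18 * z ^ 8 + 9 * z ^ 2) / (3 * z ^ 6 + 1) ^ 2
private def G2 : ℂ → ℂ := fun z =>
  (54 * z ^ 19 + 342 * z ^ 13 - 414 * z ^ 7 + 18 * z) / (3 * z ^ 6 + 1) ^ 3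
private def G3 : ℂ → ℂ := fun z =>
  (162 * z ^ 24 - 4104 * z ^ 18 + 18108 * z ^ 12 - 3816 * z ^ 6 + 18) / (3 * z ^ 6 + 1) ^ 4

private lemma hQ1 (z : ℂ) : HasDerivAt (fun z : ℂ => 3 * z ^ 6 + 1) (18 * z ^ 5) z := by
  have h := ((hasDerivAt_pow 6 z).const_mul 3).add_const 1
  refine h.congr_deriv ?_
  all_goals (push_cast; ring)

private lemma hd1 (z : ℂ) (hz : 3 * z ^ 6 + 1 ≠ 0) : HasDerivAt F (G1 z) z := by
  have hp : HasDerivAt (fun z : ℂ => z ^ 9 + 3 * z ^ 3) (9 * z ^ 8 + 9 * z ^ 2) z := by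
    have h := (hasDerivAt_pow 9 z).add ((hasDerivAt_pow 3 z).const_mul 3)
    refine h.congr_deriv ?_
    all_goals (push_cast; ring)
  have h := hp.div (hQ1 z) hz
  refine h.congr_deriv ?_
  unfold G1
  field_simp
  ring

private lemma hd2 (z : ℂ) (hz : 3 * z ^ 6 + 1 ≠ 0) : HasDerivAt G1 (G2 z) z := by
  have hp : HasDerivAt (fun z : ℂ => 9 * z ^ 14 - 18 * z ^ 8 + 9 * z ^ 2)
      (126 * z ^ 13 - 144 * z ^ 7 + 18 * z) z := by
    have h := (((hasDerivAt_pow 14 z).const_mul 9).sub ((hasDerivAt_pow 8 z).const_mul 18)).add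
      ((hasDerivAt_pow 2 z).const_mul 9)
    refine h.congr_deriv ?_
    all_goals (push_cast; ring)
  have hq : HasDerivAt (fun z : ℂ => (3 * z ^ 6 + 1) ^ 2)
      (2 * (3 * z ^ 6 + 1) * (18 * z ^ 5)) z := by
    have h := (hQ1 z).pow 2
    refine h.congr_deriv ?_
    all_goals (push_cast; ring)
  have h := hp.div hq (pow_ne_zero 2 hz)
  refine h.congr_deriv ?_
  unfold G2
  field_simp
  ring

private lemma hd3 (z : ℂ) (hz : 3 * z ^ 6 + 1 ≠ 0) : HasDerivAt G2 (G3 z) z := by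
  have hp : HasDerivAt (fun z : ℂ => 54 * z ^ 19 + 342 * z ^ 13 - 414 * z ^ 7 + 18 * z)
      (1026 * z ^ 18 + 4446 * z ^ 12 - 2898 * z ^ 6 + 18) z := by
    have h := ((((hasDerivAt_pow 19 z).const_mul 54).add ((hasDerivAt_pow 13 z).const_mul 342)).sub
      ((hasDerivAt_pow 7 z).const_mul 414)).add ((hasDerivAt_id z).const_mul 18)
    refine h.congr_deriv ?_
    all_goals (push_cast; ring)
  have hq : HasDerivAt (fun z : ℂ => (3 * z ^ 6 + 1) ^ 3)
      (3 * (3 * z ^ 6 + 1) ^ 2 * (18 * z ^ 5)) z := by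
    have h := (hQ1 z).pow 3
    refine h.congr_deriv ?_
    all_goals (push_cast; ring)
  have h := hp.div hq (pow_ne_zero 3 hz)
  refine h.congr_deriv ?_
  unfold G3
  field_simp
  ring

theorem stmt_11 :
    (∀ z : ℂ, 3 * z ^ 6 + 1 ≠ 0 →
      HasDerivAt (fun z : ℂ => (z ^ 9 + 3 * z ^ 3) / (3 * z ^ 6 + 1))
        (9 * (z - 1) ^ 2 * z ^ 2 * (z + 1) ^ 2 * (z ^ 2 - z + 1) ^ 2 *
          (z ^ 2 + z + 1) ^ 2 / (3 * z ^ 6 + 1) ^ 2) z) ∧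
    (∀ c : ℂ, c = 0 ∨ c = 1 ∨ c = -1 →
      iteratedDeriv 1 (fun z : ℂ => (z ^ 9 + 3 * z ^ 3) / (3 * z ^ 6 + 1)) c = 0 ∧
      iteratedDeriv 2 (fun z : ℂ => (z ^ 9 + 3 * z ^ 3) / (3 * z ^ 6 + 1)) c = 0 ∧
      iteratedDeriv 3 (fun z : ℂ => (z ^ 9 + 3 * z ^ 3) / (3 * z ^ 6 + 1)) c ≠ 0) := by
  have hU : IsOpen {z : ℂ | 3 * z ^ 6 + 1 ≠ 0} := by
    have hcont : Continuous fun z : ℂ => 3 * z ^ 6 + 1 := by continuity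
    exact isOpen_compl_singleton.preimage hcont
  have hder1 : ∀ z : ℂ, 3 * z ^ 6 + 1 ≠ 0 → deriv F z = G1 z := fun z hz => (hd1 z hz).deriv
  have hder2 : ∀ z : ℂ, 3 * z ^ 6 + 1 ≠ 0 → deriv (deriv F) z = G2 z := by
    intro z hz
    have hev : deriv F =ᶠ[nhds z] G1 :=
      Filter.eventually_of_mem (hU.mem_nhds hz) (fun w hw => hder1 w hw)
    rw [hev.deriv_eq]
    exact (hd2 z hz).deriv
  have hder3 : ∀ z : ℂ, 3 * z ^ 6 + 1 ≠ 0 → deriv (deriv (deriv F)) z = G3 z := by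
    intro z hz
    have hev : deriv (deriv F) =ᶠ[nhds z] G2 :=
      Filter.eventually_of_mem (hU.mem_nhds hz) (fun w hw => hder2 w hw)
    rw [hev.deriv_eq]
    exact (hd3 z hz).deriv
  constructor
  · intro z hz
    have h := hd1 z hz
    refine h.congr_deriv ?_
    unfold G1
    rw [div_eq_div_iff (pow_ne_zero 2 hz) (pow_ne_zero 2 hz)]
    ring
  · intro c hc
    have hc' : 3 * c ^ 6 + 1 ≠ 0 := by
      rcases hc with rfl | rfl | rfl <;> norm_num
    have hF : (fun z : ℂ => (z ^ 9 + 3 * z ^ 3) / (3 * z ^ 6 + 1)) = F := rfl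
    rw [hF]
    have e1 : iteratedDeriv 1 F c = G1 c := by
      rw [iteratedDeriv_one]; exact hder1 c hc'
    have e2 : iteratedDeriv 2 F c = G2 c := by
      rw [show (2 : ℕ) = 1 + 1 from rfl, iteratedDeriv_succ, iteratedDeriv_one]
      exact hder2 c hc'
    have e3 : iteratedDeriv 3 F c = G3 c := by
      rw [show (3 : ℕ) = 2 + 1 from rfl, iteratedDeriv_succ,
        show (2 : ℕ) = 1 + 1 from rfl, iteratedDeriv_succ, iteratedDeriv_one]
      exact hder3 c hc'
    rw [e1, e2, e3]
    unfold G1 G2 G3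
    rcases hc with rfl | rfl | rfl <;> norm_num

end
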